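/- For every X : ZMod n → ZMod 2 the following three statements are equivalent: (1) 𝔟^{𝔠(n)} X = X; (2) X belongs to a cycle of the Baker transformation, i.e. there exists t > 0 with 𝔟^t X = X; (3) X is 𝔟-swept, i.e. X j = 0 for every j : ZMod n whose canonical representative j.val is not divisible by 2^{ι(2,n)}. -/

import Mathlib

open Matrix

/-- The discrete Baker transformation: `(𝔟 X) i = ∑_{j : 2*j = i} X j`. -/
def baker {n : ℕ} [NeZero n] (X : ZMod n → ZMod 2) : ZMod n → ZMod 2 :=
  fun i => ∑ j ∈ Finset.univ.filter (fun j : ZMod n => (2 : ZMod n) * j = i), X j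


/-- The critical number `𝔠(n)`. -/
noncomputable def cFun (n : ℕ) : ℕ :=
  if 1 < n / 2 ^ (padicValNat 2 n) then orderOf (2 : ZMod (n / 2 ^ (padicValNat 2 n))) else 1

namespace BakerAux

variable {n : ℕ} [NeZero n]

lemma val_two_mul {i j : ZMod n} (h : (2 : ZMod n) * j = i) :
    (2 * j.val) % n = i.val := by
  have h1 : ((2 * j.val : ℕ) : ZMod n) = i := by
    push_cast
    rw [ZMod.natCast_rightInverse j]
    exact h
  have h2 := congrArg ZMod.val h1
  rwa [ZMod.val_natCast] at h2

/-- Injectivity of multiplication by 2 on the subgroup of multiples of `2^a`. -/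
lemma two_mul_inj {a m : ℕ} (hn : n = 2 ^ a * m) (hm : ¬ 2 ∣ m) {i j : ZMod n}
    (hij : (2 : ZMod n) * i = (2 : ZMod n) * j)
    (hi : 2 ^ a ∣ i.val) (hj : 2 ^ a ∣ j.val) : i = j := by
  have key : ∀ u v : ZMod n, (2 : ZMod n) * u = (2 : ZMod n) * v →
      2 ^ a ∣ u.val → 2 ^ a ∣ v.val → u.val ≤ v.val → u.val = v.val := by
    intro u v huv hu hv hle
    have h1 : (2 * u.val) % n = (2 * v.val) % n := by
      rw [val_two_mul huv, val_two_mul (rfl : (2 : ZMod n) * v = 2 * v)]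
    have h2 : n ∣ 2 * v.val - 2 * u.val :=
      (Nat.modEq_iff_dvd' (by omega)).mp h1
    set d := v.val - u.val with hd
    have hdvd : 2 ^ a ∣ d := Nat.dvd_sub hv hu
    obtain ⟨s, hs⟩ := hdvd
    have h3 : 2 * v.val - 2 * u.val = 2 ^ a * (2 * s) := by
      have hd2 : 2 * v.val - 2 * u.val = 2 * d := by omega
      rw [hd2, hs]; ring
    rw [h3, hn] at h2
    have hm2 : m ∣ 2 * s := (Nat.mul_dvd_mul_iff_left (pow_pos two_pos a)).mp h2
    have hms : m ∣ s := (Nat.Coprime.dvd_of_dvd_mul_left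
      ((Nat.coprime_comm).mp ((Nat.Prime.coprime_iff_not_dvd Nat.prime_two).mpr hm)) hm2)
    have hnd : n ∣ d := by
      rw [hs, hn]; exact Nat.mul_dvd_mul_left _ hms
    have hdlt : d < n := lt_of_le_of_lt (Nat.sub_le _ _) v.val_lt
    have : d = 0 := by
      rcases Nat.eq_zero_or_pos d with h0 | h0
      · exact h0
      · exact absurd (Nat.le_of_dvd h0 hnd) (not_le.mpr hdlt)
    omega
  rcases le_total i.val j.val with hle | hle
  · exact ZMod.val_injective n (key i j hij hi hj hle)
  · exact (ZMod.val_injective n (key j i hij.symm hj hi hle)).symm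

/-- Divisibility propagation: if `2*j = i` and `2^b ∣ j.val` then
`2^(min (b+1) a) ∣ i.val` (for any `a` with `2^a ∣ n`). -/
lemma val_dvd_step {a m : ℕ} (hn : n = 2 ^ a * m) {b : ℕ} {i j : ZMod n}
    (h : (2 : ZMod n) * j = i) (hj : 2 ^ b ∣ j.val) :
    2 ^ (min (b + 1) a) ∣ i.val := by
  have h1 : (2 * j.val) % n = i.val := val_two_mul h
  have h2 : 2 * j.val = n * (2 * j.val / n) + i.val := by
    conv_lhs => rw [← Nat.div_add_mod (2 * j.val) n]
    rw [h1]
  have hb1 : (2 : ℕ) ^ (b + 1) ∣ 2 * j.val := by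
    obtain ⟨u, hu⟩ := hj
    exact ⟨u, by rw [hu, pow_succ]; ring⟩
  have hc1 : (2 : ℕ) ^ (min (b + 1) a) ∣ 2 * j.val :=
    dvd_trans (pow_dvd_pow 2 (min_le_left _ _)) hb1
  have hcn : (2 : ℕ) ^ (min (b + 1) a) ∣ n :=
    dvd_trans (pow_dvd_pow 2 (min_le_right _ _)) ⟨m, hn⟩
  have := h2 ▸ hc1
  exact (Nat.dvd_add_right (hcn.mul_right _)).mp this

/-- Support of iterates: `baker^[k] X` is supported on multiples of `2^(min k a)`. -/
lemma iterate_support {a m : ℕ} (hn : n = 2 ^ a * m) :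
    ∀ (k : ℕ) (X : ZMod n → ZMod 2) (i : ZMod n),
      ¬ (2 ^ (min k a) ∣ i.val) → baker^[k] X i = 0 := by
  intro k
  induction k with
  | zero => intro X i hi; exact absurd (by simp) hi
  | succ k ih =>
    intro X i hi
    rw [Function.iterate_succ_apply']
    apply Finset.sum_eq_zero
    intro j hjmem
    rw [Finset.mem_filter] at hjmem
    by_contra hne
    have hj : 2 ^ (min k a) ∣ j.val := by
      by_contra hj; exact hne (ih X j hj)
    have := val_dvd_step hn hjmem.2 hj
    have hmm : min (min k a + 1) a = min (k + 1) a := by omega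
    rw [hmm] at this
    exact hi this

/-- `baker` preserves sweptness. -/
lemma baker_swept {a m : ℕ} (hn : n = 2 ^ a * m) {X : ZMod n → ZMod 2}
    (hX : ∀ j : ZMod n, ¬ (2 ^ a ∣ j.val) → X j = 0) :
    ∀ i : ZMod n, ¬ (2 ^ a ∣ i.val) → baker X i = 0 := by
  intro i hi
  apply Finset.sum_eq_zero
  intro j hjmem
  rw [Finset.mem_filter] at hjmem
  by_contra hne
  have hj : 2 ^ a ∣ j.val := by
    by_contra hj; exact hne (hX j hj)
  have := val_dvd_step hn hjmem.2 hj
  rw [min_eq_right (by omega)] at this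
  exact hi this

/-- On swept vectors, `baker X (2*i) = X i` for `i` a multiple of `2^a`. -/
lemma baker_shift {a m : ℕ} (hn : n = 2 ^ a * m) (hm : ¬ 2 ∣ m)
    {X : ZMod n → ZMod 2} (hX : ∀ j : ZMod n, ¬ (2 ^ a ∣ j.val) → X j = 0)
    {i : ZMod n} (hi : 2 ^ a ∣ i.val) :
    baker X ((2 : ZMod n) * i) = X i := by
  apply Finset.sum_eq_single_of_mem
  · exact Finset.mem_filter.mpr ⟨Finset.mem_univ i, rfl⟩
  · intro b hb hbne
    rw [Finset.mem_filter] at hb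
    by_contra hne
    have hbval : 2 ^ a ∣ b.val := by
      by_contra hj; exact hne (hX b hj)
    exact hbne (two_mul_inj hn hm hb.2 hbval hi)

/-- Multiples of `2^a` are stable under multiplication by `2`. -/
lemma two_mul_mem {a m : ℕ} (hn : n = 2 ^ a * m) {i : ZMod n}
    (hi : 2 ^ a ∣ i.val) : 2 ^ a ∣ ((2 : ZMod n) * i).val := by
  have := val_dvd_step hn (rfl : (2 : ZMod n) * i = 2 * i) hi
  rwa [min_eq_right (by omega)] at this

lemma iterate_swept {a m : ℕ} (hn : n = 2 ^ a * m) {X : ZMod n → ZMod 2}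
    (hX : ∀ j : ZMod n, ¬ (2 ^ a ∣ j.val) → X j = 0) (k : ℕ) :
    ∀ j : ZMod n, ¬ (2 ^ a ∣ j.val) → baker^[k] X j = 0 := by
  induction k with
  | zero => exact hX
  | succ k ih =>
    intro j hj
    rw [Function.iterate_succ_apply']
    exact baker_swept hn ih j hj

lemma pow_mul_mem {a m : ℕ} (hn : n = 2 ^ a * m) {i : ZMod n}
    (hi : 2 ^ a ∣ i.val) (k : ℕ) : 2 ^ a ∣ ((2 : ZMod n) ^ k * i).val := by
  induction k with
  | zero => simpa using hi
  | succ k ih =>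
    have : (2 : ZMod n) ^ (k + 1) * i = 2 * ((2 : ZMod n) ^ k * i) := by ring
    rw [this]
    exact two_mul_mem hn ih

lemma iterate_shift {a m : ℕ} (hn : n = 2 ^ a * m) (hm : ¬ 2 ∣ m)
    {X : ZMod n → ZMod 2} (hX : ∀ j : ZMod n, ¬ (2 ^ a ∣ j.val) → X j = 0) (k : ℕ) :
    ∀ i : ZMod n, 2 ^ a ∣ i.val → baker^[k] X ((2 : ZMod n) ^ k * i) = X i := by
  induction k with
  | zero => intro i _; simp
  | succ k ih =>
    intro i hi
    have harr : (2 : ZMod n) ^ (k + 1) * i = 2 * ((2 : ZMod n) ^ k * i) := by ring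
    rw [Function.iterate_succ_apply', harr,
      baker_shift hn hm (iterate_swept hn hX k) (pow_mul_mem hn hi k)]
    exact ih i hi

/-- The fixed-point property for multiplication by `2^c` when `m ∣ 2^c - 1`. -/
lemma pow_mul_fixed {a m c : ℕ} (hn : n = 2 ^ a * m) (hd : m ∣ 2 ^ c - 1)
    {i : ZMod n} (hi : 2 ^ a ∣ i.val) : (2 : ZMod n) ^ c * i = i := by
  have h2c : 1 ≤ 2 ^ c := Nat.one_le_two_pow
  have h1 : n ∣ 2 ^ c * i.val - i.val := by
    obtain ⟨p, hp⟩ := hi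
    obtain ⟨e, he⟩ := hd
    have heq : 2 ^ c * i.val - i.val = (2 ^ c - 1) * i.val := by
      rw [Nat.sub_mul, one_mul]
    rw [heq, hp, he, hn]
    exact ⟨e * p, by ring⟩
  have h2 : ((2 ^ c * i.val : ℕ) : ZMod n) = ((i.val : ℕ) : ZMod n) := by
    rw [ZMod.natCast_eq_natCast_iff]
    exact ((Nat.modEq_iff_dvd' (Nat.le_mul_of_pos_left _ (by positivity))).mpr h1).symm
  calc (2 : ZMod n) ^ c * i = ((2 ^ c * i.val : ℕ) : ZMod n) := by
        push_cast
        rw [ZMod.natCast_rightInverse i]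
      _ = i := by rw [h2]; exact ZMod.natCast_rightInverse i

lemma m_odd (n : ℕ) [NeZero n] : ¬ 2 ∣ n / 2 ^ (padicValNat 2 n) := by
  have h := Nat.not_dvd_ordCompl Nat.prime_two (NeZero.ne n)
  rwa [Nat.factorization_def n Nat.prime_two] at h

lemma n_eq (n : ℕ) [NeZero n] : n = 2 ^ (padicValNat 2 n) * (n / 2 ^ (padicValNat 2 n)) :=
  (Nat.mul_div_cancel' pow_padicValNat_dvd).symm

lemma m_pos (n : ℕ) [NeZero n] : 0 < n / 2 ^ (padicValNat 2 n) :=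
  Nat.div_pos (Nat.le_of_dvd (Nat.pos_of_ne_zero (NeZero.ne n)) pow_padicValNat_dvd)
    (by positivity)

lemma cFun_pos (n : ℕ) [NeZero n] : 0 < cFun n := by
  unfold cFun
  split_ifs with h
  · set m := n / 2 ^ (padicValNat 2 n) with hm
    have hodd := m_odd n
    have hco : Nat.Coprime 2 m := (Nat.Prime.coprime_iff_not_dvd Nat.prime_two).mpr hodd
    have h1 : (2 : ZMod m) ^ (Nat.totient m) = 1 := by
      have h2 := (ZMod.natCast_eq_natCast_iff _ _ _).mpr (Nat.ModEq.pow_totient hco)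
      push_cast at h2
      exact h2
    exact orderOf_pos_iff.mpr (isOfFinOrder_iff_pow_eq_one.mpr
      ⟨Nat.totient m, Nat.totient_pos.mpr (by omega), h1⟩)
  · exact one_pos

lemma cFun_dvd (n : ℕ) [NeZero n] : (n / 2 ^ (padicValNat 2 n)) ∣ 2 ^ (cFun n) - 1 := by
  unfold cFun
  split_ifs with h
  · set m := n / 2 ^ (padicValNat 2 n) with hm
    have h1 : (2 : ZMod m) ^ (orderOf (2 : ZMod m)) = 1 := pow_orderOf_eq_one _
    have h2 : ((2 ^ orderOf (2 : ZMod m) : ℕ) : ZMod m) = ((1 : ℕ) : ZMod m) := by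
      push_cast
      exact h1
    have h3 := (ZMod.natCast_eq_natCast_iff _ _ _).mp h2
    exact (Nat.modEq_iff_dvd' Nat.one_le_two_pow).mp h3.symm
  · have := m_pos n
    have hm1 : n / 2 ^ (padicValNat 2 n) = 1 := by omega
    rw [hm1]
    exact one_dvd _

end BakerAux

theorem baker_cycle_tfae {n : ℕ} [NeZero n] (X : ZMod n → ZMod 2) :
    (baker^[cFun n] X = X ↔ ∃ t : ℕ, 0 < t ∧ baker^[t] X = X) ∧
    ((∃ t : ℕ, 0 < t ∧ baker^[t] X = X) ↔
      ∀ j : ZMod n, ¬ (2 ^ (padicValNat 2 n) ∣ j.val) → X j = 0) := by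
  set a := padicValNat 2 n with ha
  have hn := BakerAux.n_eq n
  have hm := BakerAux.m_odd n
  -- (2) → (3)
  have h23 : (∃ t : ℕ, 0 < t ∧ baker^[t] X = X) →
      ∀ j : ZMod n, ¬ (2 ^ a ∣ j.val) → X j = 0 := by
    rintro ⟨t, ht, hfix⟩ j hj
    have hiter : baker^[t * a] X = X := by
      rw [Function.iterate_mul]
      exact Function.iterate_fixed hfix a
    have hmin : min (t * a) a = a := by
      have : a ≤ t * a := Nat.le_mul_of_pos_left a ht
      omega
    have := BakerAux.iterate_support hn (t * a) X j (by rw [hmin]; exact hj)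
    rwa [hiter] at this
  -- (3) → (1)
  have h31 : (∀ j : ZMod n, ¬ (2 ^ a ∣ j.val) → X j = 0) →
      baker^[cFun n] X = X := by
    intro hX
    funext i
    by_cases hi : 2 ^ a ∣ i.val
    · have h1 := BakerAux.iterate_shift hn hm hX (cFun n) i hi
      rwa [BakerAux.pow_mul_fixed hn (BakerAux.cFun_dvd n) hi] at h1
    · rw [BakerAux.iterate_swept hn hX (cFun n) i hi, hX i hi]
  refine ⟨⟨fun h => ⟨cFun n, BakerAux.cFun_pos n, h⟩, fun h => h31 (h23 h)⟩,
    ⟨h23, fun h => ⟨cFun n, BakerAux.cFun_pos n, h31 h⟩⟩⟩
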